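/- Let H be a quasitriangular bialgebra with R-matrix R and involution τ (involutive coalgebra map and algebra anti-automorphism), and let S ∈ H⊗A satisfy (Δ⊗id)(S) = S₁₃ R'₁₂ S₂₃ where R' = (τ⊗id)(R). Then S satisfies the universal reflection equation R₁₂ S₁ R'₁₂ S₂ = S₂ R''₁₂ S₁ R₁₂ in H⊗H⊗A, where R'' = (R')₂₁, S₁ = S₁₃, S₂ = S₂₃. -/

import Mathlib

open TensorProduct

section QT

variable (k H : Type*) [Field k] [Ring H] [Bialgebra k H]

/-- `(Δ ⊗ id)` as a map `H ⊗ H → H ⊗ (H ⊗ H)`. -/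
noncomputable def deltaL : H ⊗[k] H →ₗ[k] H ⊗[k] (H ⊗[k] H) :=
  (TensorProduct.assoc k H H H).toLinearMap ∘ₗ
    TensorProduct.map (Coalgebra.comul (R := k)) LinearMap.id

/-- `(id ⊗ Δ)` as a map `H ⊗ H → H ⊗ (H ⊗ H)`. -/
noncomputable def deltaR : H ⊗[k] H →ₗ[k] H ⊗[k] (H ⊗[k] H) :=
  TensorProduct.map LinearMap.id (Coalgebra.comul (R := k))

/-- embedding of `H ⊗ H` on legs 1, 2 of `H ⊗ H ⊗ H`. -/
noncomputable def leg12 : H ⊗[k] H →ₗ[k] H ⊗[k] (H ⊗[k] H) :=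
  TensorProduct.map LinearMap.id ((TensorProduct.mk k H H).flip (1 : H))

/-- embedding of `H ⊗ H` on legs 1, 3 of `H ⊗ H ⊗ H`. -/
noncomputable def leg13 : H ⊗[k] H →ₗ[k] H ⊗[k] (H ⊗[k] H) :=
  TensorProduct.map LinearMap.id (TensorProduct.mk k H H (1 : H))

/-- embedding of `H ⊗ H` on legs 2, 3 of `H ⊗ H ⊗ H`. -/
noncomputable def leg23 : H ⊗[k] H →ₗ[k] H ⊗[k] (H ⊗[k] H) :=
  TensorProduct.mk k H (H ⊗[k] H) (1 : H)

/-- `R` (with two-sided inverse `Rinv`) is a universal R-matrix (quasitriangular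
structure) on the bialgebra `H`. -/
noncomputable def IsUnivRMatrix (R Rinv : H ⊗[k] H) : Prop :=
  R * Rinv = 1 ∧ Rinv * R = 1 ∧
  deltaL k H R = leg13 k H R * leg23 k H R ∧
  deltaR k H R = leg13 k H R * leg12 k H R ∧
  ∀ h : H, R * Coalgebra.comul h =
    (TensorProduct.comm k H H) (Coalgebra.comul h) * R

/-- `τ` is an involutive coalgebra map and algebra anti-automorphism of `H`. -/
noncomputable def IsSkewInvolution (τ : H →ₗ[k] H) : Prop :=
  (∀ x : H, τ (τ x) = x) ∧ (∀ x y : H, τ (x * y) = τ y * τ x) ∧ τ 1 = 1 ∧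
  Coalgebra.comul (R := k) ∘ₗ τ = (TensorProduct.map τ τ) ∘ₗ Coalgebra.comul ∧
  Coalgebra.counit (R := k) ∘ₗ τ = Coalgebra.counit

end QT

section SMat

variable (k H A : Type*) [Field k] [Ring H] [Bialgebra k H] [Ring A] [Algebra k A]

/-- `(Δ ⊗ id) : H ⊗ A → H ⊗ (H ⊗ A)`. -/
noncomputable def deltaLA : H ⊗[k] A →ₗ[k] H ⊗[k] (H ⊗[k] A) :=
  (TensorProduct.assoc k H H A).toLinearMap ∘ₗ
    TensorProduct.map (Coalgebra.comul (R := k)) LinearMap.id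

/-- `(Δ^op ⊗ id) : H ⊗ A → H ⊗ (H ⊗ A)`. -/
noncomputable def deltaOpLA : H ⊗[k] A →ₗ[k] H ⊗[k] (H ⊗[k] A) :=
  (TensorProduct.assoc k H H A).toLinearMap ∘ₗ
    TensorProduct.map ((TensorProduct.comm k H H).toLinearMap ∘ₗ Coalgebra.comul (R := k))
      LinearMap.id

/-- embedding of `H ⊗ A` on legs 1, 3 of `H ⊗ H ⊗ A`:  `S ↦ S₁₃`. -/
noncomputable def sleg13 : H ⊗[k] A →ₗ[k] H ⊗[k] (H ⊗[k] A) :=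
  TensorProduct.map LinearMap.id (TensorProduct.mk k H A (1 : H))

/-- embedding of `H ⊗ A` on legs 2, 3 of `H ⊗ H ⊗ A`:  `S ↦ S₂₃`. -/
noncomputable def sleg23 : H ⊗[k] A →ₗ[k] H ⊗[k] (H ⊗[k] A) :=
  TensorProduct.mk k H (H ⊗[k] A) (1 : H)

/-- embedding of `H ⊗ H` on legs 1, 2 of `H ⊗ H ⊗ A`:  `R ↦ R₁₂`. -/
noncomputable def rleg12 : H ⊗[k] H →ₗ[k] H ⊗[k] (H ⊗[k] A) :=
  TensorProduct.map LinearMap.id ((TensorProduct.mk k H A).flip (1 : A))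

/-- `S ∈ H ⊗ A` is a universal S-matrix for `(H, R, τ)`: it satisfies the
characteristic identity `(Δ⊗id)(S) = S₁₃ R'₁₂ S₂₃` where `R' = (τ⊗id)(R)`. -/
noncomputable def IsSMatrix (R : H ⊗[k] H) (τ : H →ₗ[k] H) (S : H ⊗[k] A) : Prop :=
  deltaLA k H A S =
    sleg13 k H A S * rleg12 k H A ((TensorProduct.map τ LinearMap.id) R) * sleg23 k H A S

/-- `(ε ⊗ id) : H ⊗ A → A`. -/
noncomputable def epsA : H ⊗[k] A →ₗ[k] A :=
  (TensorProduct.lid k A).toLinearMap ∘ₗ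
    TensorProduct.map (Coalgebra.counit (R := k)) LinearMap.id

end SMat

section AuxRE

variable {k H A : Type*} [Field k] [Ring H] [Bialgebra k H] [Ring A] [Algebra k A]

/-- `w ↦` (w placed on legs 1,2 with `a` on leg 3). -/
noncomputable def phiA (a : A) : H ⊗[k] H →ₗ[k] H ⊗[k] (H ⊗[k] A) :=
  TensorProduct.map LinearMap.id ((TensorProduct.mk k H A).flip a)

lemma phiA_tmul (a : A) (x y : H) :
    phiA (k := k) (A := A) a (x ⊗ₜ[k] y) = x ⊗ₜ[k] (y ⊗ₜ[k] a) := rfl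

lemma rleg12_eq_phiA_one : rleg12 k H A = phiA (1 : A) := rfl

lemma assoc_tmul_eq_phiA (w : H ⊗[k] H) (a : A) :
    (TensorProduct.assoc k H H A) (w ⊗ₜ[k] a) = phiA a w := by
  induction w using TensorProduct.induction_on with
  | zero => rw [zero_tmul, LinearEquiv.map_zero, LinearMap.map_zero]
  | tmul x y => rfl
  | add u v hu hv => rw [add_tmul, map_add, map_add, hu, hv]

lemma rleg12_mul_phiA (x w : H ⊗[k] H) (a : A) :
    rleg12 k H A x * phiA a w = phiA a (x * w) := by
  induction x using TensorProduct.induction_on with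
  | zero => simp
  | tmul x1 x2 =>
    induction w using TensorProduct.induction_on with
    | zero => simp
    | tmul w1 w2 =>
      simp [rleg12, phiA, Algebra.TensorProduct.tmul_mul_tmul]
    | add u v hu hv => rw [map_add, mul_add, hu, hv, mul_add, map_add]
  | add u v hu hv =>
    rw [map_add, add_mul, hu, hv, add_mul, map_add]

lemma phiA_mul_rleg12 (w x : H ⊗[k] H) (a : A) :
    phiA a w * rleg12 k H A x = phiA a (w * x) := by
  induction x using TensorProduct.induction_on with
  | zero => simp
  | tmul x1 x2 =>
    induction w using TensorProduct.induction_on with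
    | zero => simp
    | tmul w1 w2 =>
      simp [rleg12, phiA, Algebra.TensorProduct.tmul_mul_tmul]
    | add u v hu hv => rw [map_add, add_mul, hu, hv, add_mul, map_add]
  | add u v hu hv =>
    rw [map_add, mul_add, hu, hv, mul_add, map_add]

lemma deltaLA_tmul (t : H) (a : A) :
    deltaLA k H A (t ⊗ₜ[k] a) = phiA a (Coalgebra.comul (R := k) t) := by
  simp only [deltaLA, LinearMap.comp_apply, TensorProduct.map_tmul, LinearMap.id_apply]
  exact assoc_tmul_eq_phiA _ _

lemma deltaOpLA_tmul (t : H) (a : A) :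
    deltaOpLA k H A (t ⊗ₜ[k] a) =
      phiA a ((TensorProduct.comm k H H) (Coalgebra.comul (R := k) t)) := by
  simp only [deltaOpLA, LinearMap.comp_apply, TensorProduct.map_tmul, LinearMap.id_apply,
    LinearEquiv.coe_coe]
  exact assoc_tmul_eq_phiA _ _

/-- The intertwining property transported to `H ⊗ H ⊗ A`. -/
lemma rleg12_comm_deltaLA (R : H ⊗[k] H)
    (hcom : ∀ h : H, R * Coalgebra.comul h =
      (TensorProduct.comm k H H) (Coalgebra.comul h) * R)
    (S : H ⊗[k] A) :
    rleg12 k H A R * deltaLA k H A S = deltaOpLA k H A S * rleg12 k H A R := by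
  induction S using TensorProduct.induction_on with
  | zero => simp
  | tmul t a =>
    rw [deltaLA_tmul, deltaOpLA_tmul, rleg12_mul_phiA, phiA_mul_rleg12, hcom]
  | add u v hu hv =>
    rw [map_add, map_add, mul_add, add_mul, hu, hv]

/-- swap of the first two legs of `H ⊗ H ⊗ A`, as an algebra automorphism. -/
noncomputable def sigmaSwap : (H ⊗[k] (H ⊗[k] A)) ≃ₐ[k] (H ⊗[k] (H ⊗[k] A)) :=
  (Algebra.TensorProduct.assoc k k k H H A).symm.trans
    ((Algebra.TensorProduct.congr (Algebra.TensorProduct.comm k H H) AlgEquiv.refl).trans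
      (Algebra.TensorProduct.assoc k k k H H A))

lemma sigmaSwap_tmul (x y : H) (a : A) :
    sigmaSwap (k := k) (x ⊗ₜ[k] (y ⊗ₜ[k] a)) = y ⊗ₜ[k] (x ⊗ₜ[k] a) := by
  simp only [sigmaSwap, AlgEquiv.trans_apply, Algebra.TensorProduct.assoc_symm_tmul,
    Algebra.TensorProduct.congr_apply, Algebra.TensorProduct.map_tmul,
    Algebra.TensorProduct.comm_tmul, AlgEquiv.coe_refl, id_eq,
    Algebra.TensorProduct.assoc_tmul, AlgHom.coe_coe]
  rfl

lemma sigmaSwap_phiA (w : H ⊗[k] H) (a : A) :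
    sigmaSwap (k := k) (phiA (k := k) (A := A) a w) =
      phiA a ((TensorProduct.comm k H H) w) := by
  induction w using TensorProduct.induction_on with
  | zero => simp
  | tmul x y => rw [phiA_tmul, sigmaSwap_tmul]; rfl
  | add u v hu hv => rw [map_add, map_add, hu, hv, map_add, map_add]

lemma sigmaSwap_rleg12 (x : H ⊗[k] H) :
    sigmaSwap (k := k) (rleg12 k H A x) = rleg12 k H A ((TensorProduct.comm k H H) x) := by
  rw [rleg12_eq_phiA_one, sigmaSwap_phiA]

lemma sigmaSwap_sleg13 (S : H ⊗[k] A) :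
    sigmaSwap (k := k) (sleg13 k H A S) = sleg23 k H A S := by
  induction S using TensorProduct.induction_on with
  | zero => simp
  | tmul t a =>
    have : sleg13 k H A (t ⊗ₜ[k] a) = t ⊗ₜ[k] ((1 : H) ⊗ₜ[k] a) := rfl
    rw [this, sigmaSwap_tmul]; rfl
  | add u v hu hv => rw [map_add, map_add, hu, hv, map_add]

lemma sigmaSwap_sleg23 (S : H ⊗[k] A) :
    sigmaSwap (k := k) (sleg23 k H A S) = sleg13 k H A S := by
  induction S using TensorProduct.induction_on with
  | zero => simp
  | tmul t a =>
    have : sleg23 k H A (t ⊗ₜ[k] a) = (1 : H) ⊗ₜ[k] (t ⊗ₜ[k] a) := rfl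
    rw [this, sigmaSwap_tmul]; rfl
  | add u v hu hv => rw [map_add, map_add, hu, hv, map_add]

lemma sigmaSwap_deltaLA (S : H ⊗[k] A) :
    sigmaSwap (k := k) (deltaLA k H A S) = deltaOpLA k H A S := by
  induction S using TensorProduct.induction_on with
  | zero => simp
  | tmul t a => rw [deltaLA_tmul, sigmaSwap_phiA, deltaOpLA_tmul]
  | add u v hu hv => rw [map_add, map_add, hu, hv, map_add]

end AuxRE

/-- a universal S-matrix `S ∈ H ⊗ A` (satisfying the characteristic identity
`(Δ⊗id)(S) = S₁₃ R'₁₂ S₂₃`, `R' = (τ⊗id)(R)`) satisfies the universal reflection equation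
`R₁₂ S₁ R'₁₂ S₂ = S₂ R''₁₂ S₁ R₁₂` in `H ⊗ H ⊗ A`, where `R'' = (R')₂₁`. -/
theorem SMatrix_reflection_equation
    {k H A : Type*} [Field k] [Ring H] [Bialgebra k H] [Ring A] [Algebra k A]
    (R Rinv : H ⊗[k] H) (hR : IsUnivRMatrix k H R Rinv)
    (τ : H →ₗ[k] H) (hτ : IsSkewInvolution k H τ)
    (S : H ⊗[k] A) (hS : IsSMatrix k H A R τ S) :
    rleg12 k H A R * sleg13 k H A S *
        rleg12 k H A ((TensorProduct.map τ LinearMap.id) R) * sleg23 k H A S =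
      sleg23 k H A S *
        rleg12 k H A ((TensorProduct.comm k H H) ((TensorProduct.map τ LinearMap.id) R)) *
        sleg13 k H A S * rleg12 k H A R := by
  have hS' : deltaLA k H A S =
      sleg13 k H A S * rleg12 k H A ((TensorProduct.map τ LinearMap.id) R) * sleg23 k H A S := hS
  have hS2 : deltaLA k H A S =
      sleg13 k H A S * (rleg12 k H A ((TensorProduct.map τ LinearMap.id) R) * sleg23 k H A S) := by
    rw [hS', mul_assoc]
  have hop : deltaOpLA k H A S =
      sleg23 k H A S *
        rleg12 k H A ((TensorProduct.comm k H H) ((TensorProduct.map τ LinearMap.id) R)) *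
        sleg13 k H A S := by
    have h2 := congrArg (sigmaSwap (k := k)) hS'
    rw [sigmaSwap_deltaLA, map_mul, map_mul, sigmaSwap_sleg13, sigmaSwap_sleg23,
      sigmaSwap_rleg12] at h2
    exact h2
  have hint := rleg12_comm_deltaLA R hR.2.2.2.2 S
  rw [mul_assoc, mul_assoc, ← hS2, hint, hop]
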